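/- Let c be a real number with 1 < c < 3 and c ≠ 2, let ε > 0 be fixed and sufficiently small, let P be sufficiently large and τ = P^{1-c-ε}. Then for every real ℓ with 1/τ ≤ ℓ ≪ P^c, the sum V_ℓ = Σ 1/|[n1^c]+[n2^c]-[n3^c]-[n4^c]|, taken over all integer quadruples (n1,n2,n3,n4) with P/2 < n1,n2,n3,n4 ≤ P and ℓ < |[n1^c]+[n2^c]-[n3^c]-[n4^c]| ≤ 2ℓ, satisfies V_ℓ ≪ P^{4-c}, with implied constant depending only on c and ε. -/

import Mathlib

open scoped Classical
open Finset Real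

/-- `Dfl c q = [n₁^c] + [n₂^c] - [n₃^c] - [n₄^c]` for a quadruple `q = (n₁,n₂,n₃,n₄)`. -/
noncomputable def Dfl (c : ℝ) (q : ℕ × ℕ × ℕ × ℕ) : ℤ :=
  ⌊(q.1 : ℝ) ^ c⌋ + ⌊(q.2.1 : ℝ) ^ c⌋ - ⌊(q.2.2.1 : ℝ) ^ c⌋ - ⌊(q.2.2.2 : ℝ) ^ c⌋

/-- `Vsum c P ℓ = Σ 1/|[n₁^c]+[n₂^c]-[n₃^c]-[n₄^c]|` over integer quadruples
`P/2 < n₁,n₂,n₃,n₄ ≤ P` with `ℓ < |[n₁^c]+[n₂^c]-[n₃^c]-[n₄^c]| ≤ 2ℓ`. -/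
noncomputable def Vsum (c P ℓ : ℝ) : ℝ :=
  ∑ q ∈ (((Finset.Ioc ⌊P / 2⌋₊ ⌊P⌋₊) ×ˢ (Finset.Ioc ⌊P / 2⌋₊ ⌊P⌋₊) ×ˢ
      (Finset.Ioc ⌊P / 2⌋₊ ⌊P⌋₊) ×ˢ (Finset.Ioc ⌊P / 2⌋₊ ⌊P⌋₊)).filter
    (fun q => ℓ < |((Dfl c q : ℤ) : ℝ)| ∧ |((Dfl c q : ℤ) : ℝ)| ≤ 2 * ℓ)),
    1 / |((Dfl c q : ℤ) : ℝ)|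

lemma bern (c : ℝ) (hc : 1 ≤ c) (A B : ℝ) (hA : 1 ≤ A) (hAB : A ≤ B) :
    c * A ^ (c - 1) * (B - A) ≤ B ^ c - A ^ c := by
  have h0 : (0:ℝ) < A := by linarith
  have hB0 : (0:ℝ) ≤ B := by linarith
  have hs : (-1:ℝ) ≤ (B - A) / A := by
    have : 0 ≤ (B - A) / A := div_nonneg (by linarith) h0.le
    linarith
  have h1 : 1 + c * ((B - A) / A) ≤ (1 + (B - A) / A) ^ c :=
    one_add_mul_self_le_rpow_one_add hs hc
  have h2 : 1 + (B - A) / A = B / A := by field_simp; ring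
  rw [h2] at h1
  have h3 : (B / A) ^ c = B ^ c / A ^ c := Real.div_rpow hB0 h0.le c
  rw [h3] at h1
  have hAc : (0:ℝ) < A ^ c := Real.rpow_pos_of_pos h0 c
  have h4 : (1 + c * ((B - A) / A)) * A ^ c ≤ B ^ c := by
    calc (1 + c * ((B - A) / A)) * A ^ c ≤ (B ^ c / A ^ c) * A ^ c :=
          mul_le_mul_of_nonneg_right h1 hAc.le
    _ = B ^ c := by field_simp
  have h5 : A ^ (c - 1) * A = A ^ c := by
    nth_rewrite 2 [← Real.rpow_one A]
    rw [← Real.rpow_add h0]; ring_nf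
  have h6 : (B - A) / A * A ^ c = (B - A) * A ^ (c - 1) := by
    rw [← h5]; field_simp
  nlinarith [h4, h6]

lemma key (c : ℝ) (hc : 1 < c) (N M : ℕ) (hN : 1 ≤ N) (lo L : ℝ) (hL : 0 ≤ L) :
    (((Finset.Ioc N M).filter (fun (n : ℕ) => lo ≤ (n:ℝ) ^ c ∧ (n:ℝ) ^ c ≤ lo + L)).card : ℝ)
      ≤ L / (c * (N:ℝ) ^ (c - 1)) + 1 := by
  set W : ℝ := L / (c * (N:ℝ) ^ (c - 1)) with hW
  have hNpos : (0:ℝ) < (N:ℝ) := by exact_mod_cast hN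
  have hden : (0:ℝ) < c * (N:ℝ) ^ (c - 1) :=
    mul_pos (by linarith) (Real.rpow_pos_of_pos hNpos _)
  have hW0 : 0 ≤ W := div_nonneg hL hden.le
  set S := (Finset.Ioc N M).filter (fun (n : ℕ) => lo ≤ (n:ℝ) ^ c ∧ (n:ℝ) ^ c ≤ lo + L) with hS
  rcases S.eq_empty_or_nonempty with h | h
  · rw [h]; simp; linarith
  · set a := S.min' h with ha
    have haS : a ∈ S := S.min'_mem h
    have haI := Finset.mem_filter.mp haS
    have ha1 : (1:ℝ) ≤ (a:ℝ) := by
      have : N < a := (Finset.mem_Ioc.mp haI.1).1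
      have : 1 ≤ a := le_trans hN this.le
      exact_mod_cast this
    have hsub : S ⊆ Finset.Icc a (a + ⌊W⌋₊) := by
      intro n hn
      have hnI := Finset.mem_filter.mp hn
      have han : a ≤ n := S.min'_le n hn
      have hcast : ((a:ℝ)) ≤ (n:ℝ) := by exact_mod_cast han
      have hb := bern c hc.le (a:ℝ) (n:ℝ) ha1 hcast
      have hNle : (N:ℝ) ≤ (a:ℝ) := by
        exact_mod_cast (Finset.mem_Ioc.mp haI.1).1.le
      have hmono : (N:ℝ) ^ (c-1) ≤ (a:ℝ) ^ (c-1) :=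
        Real.rpow_le_rpow hNpos.le hNle (by linarith)
      have hdiff : (n:ℝ) ^ c - (a:ℝ) ^ c ≤ L := by
        have := hnI.2.2
        have := haI.2.1
        linarith
      have hstep : c * (N:ℝ) ^ (c-1) * ((n:ℝ) - (a:ℝ)) ≤ L := by
        nlinarith [Real.rpow_pos_of_pos hNpos (c-1)]
      have hle : ((n:ℝ) - (a:ℝ)) ≤ W := by
        rw [hW, le_div_iff₀ hden]; nlinarith
      have : ((n - a : ℕ) : ℝ) ≤ W := by
        rw [Nat.cast_sub han]; exact hle
      have hna : n - a ≤ ⌊W⌋₊ := Nat.le_floor this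
      rw [Finset.mem_Icc]
      omega
    have hcard : S.card ≤ ⌊W⌋₊ + 1 := by
      calc S.card ≤ (Finset.Icc a (a + ⌊W⌋₊)).card := Finset.card_le_card hsub
      _ = ⌊W⌋₊ + 1 := by rw [Nat.card_Icc]; omega
    calc (S.card : ℝ) ≤ (⌊W⌋₊ : ℝ) + 1 := by exact_mod_cast hcard
    _ ≤ W + 1 := by linarith [Nat.floor_le hW0]

lemma card_filter_prod_le {α β : Type*} (s : Finset α) (t : Finset β)
    (p : α × β → Prop) [DecidablePred p] (B : ℝ) (hB : 0 ≤ B)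
    (h : ∀ b ∈ t, ((s.filter (fun a => p (a, b))).card : ℝ) ≤ B) :
    ((((s ×ˢ t)).filter p).card : ℝ) ≤ t.card * B := by
  classical
  have hmem : ∀ x ∈ (s ×ˢ t).filter p, Prod.snd x ∈ t := by
    intro x hx
    exact (Finset.mem_product.mp (Finset.mem_filter.mp hx).1).2
  rw [Finset.card_eq_sum_card_fiberwise hmem]
  push_cast
  calc (∑ b ∈ t, ((((s ×ˢ t).filter p).filter (fun x => x.2 = b)).card : ℝ))
      ≤ ∑ b ∈ t, B := by
        apply Finset.sum_le_sum
        intro b hb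
        refine le_trans ?_ (h b hb)
        have : (((s ×ˢ t).filter p).filter (fun x => x.2 = b)).card
            ≤ (s.filter (fun a => p (a, b))).card := by
          apply Finset.card_le_card_of_injOn (fun x => x.1)
          · intro x hx
            simp only [Finset.mem_coe, Finset.mem_filter] at hx ⊢
            obtain ⟨⟨hx1, hx2⟩, hx3⟩ := hx
            have : x = (x.1, b) := by
              rw [← hx3]
            refine ⟨(Finset.mem_product.mp hx1).1, ?_⟩
            rw [← this]; exact hx2
          · intro x hx y hy hxy
            simp only [Finset.mem_coe, Finset.mem_filter] at hx hy
            exact Prod.ext hxy (hx.2.trans hy.2.symm)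
        exact_mod_cast this
    _ = t.card * B := by rw [Finset.sum_const, nsmul_eq_mul]

theorem stmt_7 (c : ℝ) (hc1 : 1 < c) (hc2 : c < 3) (hc3 : c ≠ 2) :
    ∃ ε₀ > 0, ∀ ε : ℝ, 0 < ε → ε ≤ ε₀ →
      ∀ A > 0, ∃ C > 0, ∃ P₀ : ℝ, ∀ P : ℝ, P₀ ≤ P →
        ∀ τ : ℝ, τ = P ^ (1 - c - ε) →
          ∀ ℓ : ℝ, 1 / τ ≤ ℓ → ℓ ≤ A * P ^ c →
            Vsum c P ℓ ≤ C * P ^ (4 - c) := by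
  have hc0 : (0:ℝ) < c := by linarith
  refine ⟨1, one_pos, fun ε hε hε1 A hA => ?_⟩
  set K₀ : ℝ := 5 * (4:ℝ) ^ (c - 1) / c + 1 with hK₀
  have hK₀pos : 0 < K₀ := by
    have h4 : (0:ℝ) < (4:ℝ) ^ (c - 1) := Real.rpow_pos_of_pos (by norm_num) _
    have h5 : 0 < 5 * (4:ℝ) ^ (c - 1) / c := by positivity
    rw [hK₀]; linarith
  refine ⟨K₀, hK₀pos, 4, fun P hP τ hτ ℓ hℓτ hℓA => ?_⟩
  have hP0 : (0:ℝ) < P := by linarith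
  have hP1 : (1:ℝ) ≤ P := by linarith
  -- lower bounds on ℓ
  have hτeq : 1 / τ = P ^ (c + ε - 1) := by
    rw [hτ, one_div, ← Real.rpow_neg hP0.le, show -(1 - c - ε) = c + ε - 1 by ring]
  have hℓ1 : P ^ (c - 1) ≤ ℓ := by
    have h1 : P ^ (c - 1) ≤ P ^ (c + ε - 1) :=
      Real.rpow_le_rpow_of_exponent_le hP1 (by linarith)
    rw [hτeq] at hℓτ; linarith
  have hℓge1 : (1:ℝ) ≤ ℓ := by
    have h1 : P ^ (0:ℝ) ≤ P ^ (c - 1) :=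
      Real.rpow_le_rpow_of_exponent_le hP1 (by linarith)
    rw [Real.rpow_zero] at h1
    linarith
  have hℓpos : (0:ℝ) < ℓ := by linarith
  have hℓP : (1:ℝ) ≤ ℓ * P ^ (1 - c) := by
    have hpow : (0:ℝ) < P ^ (1 - c) := Real.rpow_pos_of_pos hP0 _
    have h1 : P ^ (c - 1) * P ^ (1 - c) ≤ ℓ * P ^ (1 - c) :=
      mul_le_mul_of_nonneg_right hℓ1 hpow.le
    have h2 : P ^ (c - 1) * P ^ (1 - c) = 1 := by
      rw [← Real.rpow_add hP0]; norm_num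
    linarith
  -- the range
  set N : ℕ := ⌊P / 2⌋₊ with hNdef
  set M : ℕ := ⌊P⌋₊ with hMdef
  set T : Finset ℕ := Finset.Ioc N M with hT
  have hN1 : 1 ≤ N := by
    rw [hNdef]
    exact Nat.le_floor (by push_cast; linarith)
  have hNP4 : P / 4 ≤ (N:ℝ) := by
    have := Nat.sub_one_lt_floor (P / 2)
    rw [hNdef]; push_cast at this ⊢; linarith
  have hTcard : (T.card : ℝ) ≤ P := by
    rw [hT, Nat.card_Ioc]
    have h1 : ((M - N : ℕ) : ℝ) ≤ (M : ℝ) := by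
      have := Nat.sub_le M N
      exact_mod_cast this
    have h2 : ((M:ℕ) : ℝ) ≤ P := by
      rw [hMdef]; exact Nat.floor_le hP0.le
    linarith
  -- fiberwise bound
  set B : ℝ := K₀ * (ℓ * P ^ (1 - c)) with hB
  have hBpos : 0 < B := by
    have : (0:ℝ) < P ^ (1 - c) := Real.rpow_pos_of_pos hP0 _
    positivity
  have hfib : ∀ b ∈ (T ×ˢ T ×ˢ T),
      ((T.filter (fun a => ℓ < |((Dfl c (a, b) : ℤ) : ℝ)| ∧
        |((Dfl c (a, b) : ℤ) : ℝ)| ≤ 2 * ℓ)).card : ℝ) ≤ B := by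
    intro b _
    set K : ℝ := (⌊((b.2.1:ℕ):ℝ) ^ c⌋ : ℝ) + (⌊((b.2.2:ℕ):ℝ) ^ c⌋ : ℝ)
      - (⌊((b.1:ℕ):ℝ) ^ c⌋ : ℝ) with hK
    have hsub : (T.filter (fun a => ℓ < |((Dfl c (a, b) : ℤ) : ℝ)| ∧
        |((Dfl c (a, b) : ℤ) : ℝ)| ≤ 2 * ℓ)) ⊆
        T.filter (fun (n : ℕ) => (K - 2*ℓ) ≤ (n:ℝ) ^ c ∧ (n:ℝ) ^ c ≤ (K - 2*ℓ) + (4*ℓ+1)) := by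
      intro a ha
      simp only [Finset.mem_filter] at ha ⊢
      refine ⟨ha.1, ?_, ?_⟩
      · have habs := abs_le.mp ha.2.2
        have hfl := Int.floor_le ((a:ℝ) ^ c)
        unfold Dfl at habs
        push_cast at habs
        rw [hK]; linarith [habs.1]
      · have habs := abs_le.mp ha.2.2
        have hfl := Int.lt_floor_add_one ((a:ℝ) ^ c)
        unfold Dfl at habs
        push_cast at habs
        rw [hK]; linarith [habs.2]
    have hcard := Finset.card_le_card hsub
    have hkey := key c hc1 N M hN1 (K - 2*ℓ) (4*ℓ+1) (by linarith)
    have h1 : ((T.filter (fun a => ℓ < |((Dfl c (a, b) : ℤ) : ℝ)| ∧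
        |((Dfl c (a, b) : ℤ) : ℝ)| ≤ 2 * ℓ)).card : ℝ)
        ≤ (4*ℓ+1) / (c * (N:ℝ) ^ (c - 1)) + 1 := by
      refine le_trans ?_ hkey
      exact_mod_cast hcard
    refine h1.trans ?_
    -- arithmetic: (4ℓ+1)/(c N^{c-1}) + 1 ≤ K₀ ℓ P^{1-c}
    have hNpos : (0:ℝ) < (N:ℝ) := by
      have : (0:ℝ) < P / 4 := by linarith
      linarith
    have hP4pos : (0:ℝ) < P / 4 := by linarith
    have hdenN : (0:ℝ) < c * (N:ℝ) ^ (c - 1) :=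
      mul_pos hc0 (Real.rpow_pos_of_pos hNpos _)
    have hdenP : (0:ℝ) < c * (P/4) ^ (c - 1) :=
      mul_pos hc0 (Real.rpow_pos_of_pos hP4pos _)
    have hmono : (P/4) ^ (c-1) ≤ (N:ℝ) ^ (c-1) :=
      Real.rpow_le_rpow hP4pos.le hNP4 (by linarith)
    have hstep1 : (4*ℓ+1) / (c * (N:ℝ) ^ (c - 1)) ≤ (5*ℓ) / (c * (P/4) ^ (c - 1)) := by
      apply div_le_div₀ (by positivity) (by linarith) hdenP
      exact mul_le_mul_of_nonneg_left hmono hc0.le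
    have heq : (5*ℓ) / (c * (P/4) ^ (c - 1)) = (5 * (4:ℝ) ^ (c-1) / c) * (ℓ * P ^ (1 - c)) := by
      have e1 : (P/4) ^ (c-1) = P ^ (c-1) / (4:ℝ) ^ (c-1) :=
        Real.div_rpow hP0.le (by norm_num) _
      have e2 : P ^ (1-c) = (P ^ (c-1))⁻¹ := by
        rw [show (1-c) = -(c-1) by ring, Real.rpow_neg hP0.le]
      rw [e1, e2]
      have h4 : ((4:ℝ) ^ (c-1)) ≠ 0 := ne_of_gt (Real.rpow_pos_of_pos (by norm_num) _)
      have hPc : (P ^ (c-1)) ≠ 0 := ne_of_gt (Real.rpow_pos_of_pos hP0 _)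
      field_simp
    rw [hB, hK₀]
    have h45 : (0:ℝ) < 5 * (4:ℝ) ^ (c-1) / c := by
      have : (0:ℝ) < (4:ℝ) ^ (c - 1) := Real.rpow_pos_of_pos (by norm_num) _
      positivity
    nlinarith [hstep1, heq, hℓP]
  -- put it together
  have hprod := card_filter_prod_le T (T ×ˢ T ×ˢ T)
    (fun q => ℓ < |((Dfl c q : ℤ) : ℝ)| ∧ |((Dfl c q : ℤ) : ℝ)| ≤ 2 * ℓ) B hBpos.le hfib
  have hsum : Vsum c P ℓ ≤
      (((T ×ˢ T ×ˢ T ×ˢ T).filter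
        (fun q => ℓ < |((Dfl c q : ℤ) : ℝ)| ∧ |((Dfl c q : ℤ) : ℝ)| ≤ 2 * ℓ)).card : ℝ) * (1/ℓ) := by
    rw [Vsum]
    refine le_trans (Finset.sum_le_card_nsmul _ _ (1/ℓ) ?_) ?_
    · intro q hq
      exact one_div_le_one_div_of_le hℓpos (Finset.mem_filter.mp hq).2.1.le
    · rw [nsmul_eq_mul]
  have hcard3 : ((T ×ˢ T ×ˢ T).card : ℝ) ≤ P ^ (3:ℕ) := by
    rw [Finset.card_product, Finset.card_product]
    push_cast
    have h0 : (0:ℝ) ≤ (T.card : ℝ) := Nat.cast_nonneg _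
    calc (T.card : ℝ) * ((T.card : ℝ) * (T.card : ℝ)) ≤ P * (P * P) := by
          apply mul_le_mul hTcard _ (by positivity) hP0.le
          apply mul_le_mul hTcard hTcard h0 hP0.le
    _ = P ^ (3:ℕ) := by ring
  have hfinal : (((T ×ˢ T ×ˢ T ×ˢ T).filter
        (fun q => ℓ < |((Dfl c q : ℤ) : ℝ)| ∧ |((Dfl c q : ℤ) : ℝ)| ≤ 2 * ℓ)).card : ℝ) * (1/ℓ)
      ≤ K₀ * P ^ (4 - c) := by
    have h1 : (((T ×ˢ T ×ˢ T ×ˢ T).filter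
        (fun q => ℓ < |((Dfl c q : ℤ) : ℝ)| ∧ |((Dfl c q : ℤ) : ℝ)| ≤ 2 * ℓ)).card : ℝ)
        ≤ ((T ×ˢ T ×ˢ T).card : ℝ) * B := hprod
    have h2 : (((T ×ˢ T ×ˢ T ×ˢ T).filter
        (fun q => ℓ < |((Dfl c q : ℤ) : ℝ)| ∧ |((Dfl c q : ℤ) : ℝ)| ≤ 2 * ℓ)).card : ℝ) * (1/ℓ)
        ≤ (((T ×ˢ T ×ˢ T).card : ℝ) * B) * (1/ℓ) := by
      apply mul_le_mul_of_nonneg_right h1 (by positivity)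
    refine h2.trans ?_
    have hBℓ : B * (1/ℓ) = K₀ * P ^ (1 - c) := by
      rw [hB]; field_simp
    have h3 : (((T ×ˢ T ×ˢ T).card : ℝ) * B) * (1/ℓ) = ((T ×ˢ T ×ˢ T).card : ℝ) * (K₀ * P ^ (1-c)) := by
      rw [mul_assoc, hBℓ]
    rw [h3]
    have hpow : (0:ℝ) < K₀ * P ^ (1-c) := by
      have : (0:ℝ) < P ^ (1 - c) := Real.rpow_pos_of_pos hP0 _
      positivity
    have h4 : ((T ×ˢ T ×ˢ T).card : ℝ) * (K₀ * P ^ (1-c)) ≤ P ^ (3:ℕ) * (K₀ * P ^ (1-c)) :=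
      mul_le_mul_of_nonneg_right hcard3 hpow.le
    refine h4.trans_eq ?_
    have : (P:ℝ) ^ (3:ℕ) = P ^ ((3:ℕ):ℝ) := (Real.rpow_natCast P 3).symm
    rw [this, show ((3:ℕ):ℝ) = (3:ℝ) by norm_num]
    rw [mul_comm (K₀) _, ← mul_assoc, ← Real.rpow_add hP0]
    rw [show (3:ℝ) + (1 - c) = 4 - c by ring]
    ring
  calc Vsum c P ℓ ≤ _ := hsum
  _ ≤ K₀ * P ^ (4 - c) := hfinal
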